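/- Let X and Y be Hausdorff real topological vector spaces, each partially ordered by a topologically closed cone (X₊ and Y₊ respectively), and assume that in each of X and Y every increasing net of positive elements that is bounded above has a supremum and converges to this supremum. Let A ⊆ X₊ and B ⊆ Y₊ be subsets such that every element of X₊ is the limit of some net of elements of A and every element of Y₊ is the limit of some net of elements of B. Let f : X₊ → Y₊ be a homeomorphism, and let Ω, Θ be sets with A ⊆ Ω ⊆ X₊ and B ⊆ Θ ⊆ Y₊ satisfying Ω + A ⊆ Ω and Θ + B ⊆ Θ, such that f restricts to an order isomorphism of Ω onto Θ. Then f restricts to an order isomorphism of Ω^m onto Θ^m, where Ω^m denotes the set Ω together with all suprema of increasing nets in Ω that are bounded above, and Θ^m is defined analogously. -/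

import Mathlib

/-- `C` is a cone in the real vector space `X`. -/
def IsWedgeCone {X : Type*} [AddCommGroup X] [Module ℝ X] (C : Set X) : Prop :=
  (∀ x ∈ C, ∀ y ∈ C, x + y ∈ C) ∧ (∀ t : ℝ, 0 ≤ t → ∀ x ∈ C, t • x ∈ C) ∧
    (∀ x ∈ C, -x ∈ C → x = 0)

/-- The partial order induced by the cone `C`: `x ≤ y` iff `y - x ∈ C`. -/
def ConeLE {X : Type*} [AddCommGroup X] (C : Set X) (x y : X) : Prop := y - x ∈ C

/-- `b` is the supremum (least upper bound) of the set `S` with respect to the order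
induced by the cone `C`. -/
def IsSupOf {X : Type*} [AddCommGroup X] (C S : Set X) (b : X) : Prop :=
  (∀ s ∈ S, ConeLE C s b) ∧ ∀ z, (∀ s ∈ S, ConeLE C s z) → ConeLE C b z

/-- `Ω^m`: the set `Ω` together with the suprema of all increasing nets (equivalently, of all
nonempty upward-directed subsets) in `Ω` that are bounded above. -/
def MonSupAdjoin {X : Type*} [AddCommGroup X] (C Ω : Set X) : Set X :=
  Ω ∪ {x | ∃ S ⊆ Ω, S.Nonempty ∧ DirectedOn (ConeLE C) S ∧
    (∃ z, ∀ s ∈ S, ConeLE C s z) ∧ IsSupOf C S x}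

namespace OrderIsoExtAux

lemma zero_mem {X : Type*} [AddCommGroup X] [Module ℝ X] {C : Set X}
    (hC : IsWedgeCone C) {x : X} (hx : x ∈ C) : (0:X) ∈ C := by
  have := hC.2.1 0 le_rfl x hx
  simpa using this

lemma coneLE_trans {X : Type*} [AddCommGroup X] {C : Set X}
    (hadd : ∀ x ∈ C, ∀ y ∈ C, x + y ∈ C) {x y z : X}
    (h1 : ConeLE C x y) (h2 : ConeLE C y z) : ConeLE C x z := by
  have := hadd _ h2 _ h1
  simpa [ConeLE, sub_add_sub_cancel] using this

lemma monSupAdjoin_subset {X : Type*} [AddCommGroup X] [Module ℝ X] {C Ω : Set X}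
    (hC : IsWedgeCone C) (hΩC : Ω ⊆ C) : MonSupAdjoin C Ω ⊆ C := by
  rintro x (hx | ⟨S, hSΩ, ⟨s0, hs0⟩, _, _, hsup⟩)
  · exact hΩC hx
  · have h1 : x - s0 ∈ C := hsup.1 s0 hs0
    have := hC.1 _ h1 _ (hΩC (hSΩ hs0))
    simpa using this

lemma lemL {X Y : Type*}
    [AddCommGroup X] [TopologicalSpace X] [IsTopologicalAddGroup X]
    [AddCommGroup Y] [TopologicalSpace Y] [IsTopologicalAddGroup Y]
    {C : Set X} {D : Set Y} (hDclosed : IsClosed D)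
    {A Ω : Set X} (hAC : A ⊆ C) (hAdense : C ⊆ closure A)
    (hΩC : Ω ⊆ C) (hΩplus : ∀ w ∈ Ω, ∀ a ∈ A, w + a ∈ Ω)
    {f : X → Y} (hfcont : ContinuousOn f C)
    (hiso : ∀ x ∈ Ω, ∀ y ∈ Ω, (ConeLE C x y ↔ ConeLE D (f x) (f y)))
    {s y : X} (hs : s ∈ Ω) (hy : y ∈ C) (hsy : ConeLE C s y) :
    ConeLE D (f s) (f y) := by
  have hne : (nhdsWithin (y - s) A).NeBot :=
    mem_closure_iff_nhdsWithin_neBot.mp (hAdense hsy)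
  have hmem : ∀ᶠ a in nhdsWithin (y - s) A, a ∈ A := eventually_mem_nhdsWithin
  have h1 : Filter.Tendsto (fun a => s + a) (nhdsWithin (y - s) A) (nhds y) := by
    have h : Filter.Tendsto (fun a : X => s + a) (nhds (y - s)) (nhds (s + (y - s))) :=
      (continuous_add_left s).tendsto (y - s)
    rw [add_sub_cancel] at h
    exact h.mono_left nhdsWithin_le_nhds
  have h2 : Filter.Tendsto (fun a => s + a) (nhdsWithin (y - s) A) (nhdsWithin y C) := by
    rw [tendsto_nhdsWithin_iff]
    exact ⟨h1, hmem.mono fun a ha => hΩC (hΩplus s hs a ha)⟩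
  have h3 : Filter.Tendsto (fun a => f (s + a) - f s) (nhdsWithin (y - s) A)
      (nhds (f y - f s)) := ((hfcont y hy).tendsto.comp h2).sub_const _
  have h4 : ∀ᶠ a in nhdsWithin (y - s) A, f (s + a) - f s ∈ D :=
    hmem.mono fun a ha => (hiso s hs _ (hΩplus s hs a ha)).mp
      (by simpa [ConeLE] using hAC ha)
  exact hDclosed.mem_of_tendsto h3 h4

lemma supTransfer {X Y : Type*}
    [AddCommGroup X] [Module ℝ X] [TopologicalSpace X] [IsTopologicalAddGroup X]
    [AddCommGroup Y] [TopologicalSpace Y] [IsTopologicalAddGroup Y]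
    {C : Set X} {D : Set Y} (hC : IsWedgeCone C) (hDclosed : IsClosed D)
    (hXmc : ∀ S : Set X, S ⊆ C → S.Nonempty → DirectedOn (ConeLE C) S →
      (∃ z, ∀ s ∈ S, ConeLE C s z) →
      ∃ b, IsSupOf C S b ∧ ∀ U ∈ nhds b, ∃ s ∈ S, ∀ t ∈ S, ConeLE C s t → t ∈ U)
    {Ω : Set X} (hΩC : Ω ⊆ C)
    {f : X → Y} (hfcont : ContinuousOn f C)
    (hiso : ∀ x ∈ Ω, ∀ y ∈ Ω, (ConeLE C x y ↔ ConeLE D (f x) (f y)))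
    {S : Set X} {x : X} (hSΩ : S ⊆ Ω) (hSne : S.Nonempty)
    (hdir : DirectedOn (ConeLE C) S) (hbdd : ∃ z, ∀ s ∈ S, ConeLE C s z)
    (hsup : IsSupOf C S x) :
    x ∈ C ∧ IsSupOf D (f '' S) (f x) := by
  have hSC : S ⊆ C := fun s hs => hΩC (hSΩ hs)
  have hxC : x ∈ C := by
    obtain ⟨s0, hs0⟩ := hSne
    have h1 : x - s0 ∈ C := hsup.1 s0 hs0
    have := hC.1 _ h1 _ (hSC hs0)
    simpa using this
  obtain ⟨b, hb, hconv⟩ := hXmc S hSC hSne hdir hbdd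
  have hbx : b = x := by
    have h1 : ConeLE C x b := hsup.2 b hb.1
    have h2 : ConeLE C b x := hb.2 x hsup.1
    have := hC.2.2 (x - b) h2 (by rwa [neg_sub])
    have : x = b := by rwa [sub_eq_zero] at this
    exact this.symm
  rw [hbx] at hconv
  refine ⟨hxC, ?_, ?_⟩
  · rintro _ ⟨s0, hs0, rfl⟩
    have hcx : Filter.Tendsto (fun t => f t - f s0) (nhdsWithin x C)
        (nhds (f x - f s0)) := (hfcont x hxC).tendsto.sub_const _
    refine hDclosed.closure_subset (mem_closure_iff_nhds.mpr fun V hV => ?_)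
    obtain ⟨u, huo, hxu, husub⟩ := mem_nhdsWithin.mp (hcx hV)
    obtain ⟨s1, hs1, htail⟩ := hconv u (huo.mem_nhds hxu)
    obtain ⟨r, hr, hs0r, hs1r⟩ := hdir s0 hs0 s1 hs1
    refine ⟨f r - f s0, husub ⟨htail r hr hs1r, hSC hr⟩, ?_⟩
    exact (hiso s0 (hSΩ hs0) r (hSΩ hr)).mp hs0r
  · intro z hz
    have hcx : Filter.Tendsto (fun t => z - f t) (nhdsWithin x C)
        (nhds (z - f x)) := Filter.Tendsto.const_sub _ (hfcont x hxC).tendsto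
    refine hDclosed.closure_subset (mem_closure_iff_nhds.mpr fun V hV => ?_)
    obtain ⟨u, huo, hxu, husub⟩ := mem_nhdsWithin.mp (hcx hV)
    obtain ⟨s1, hs1, htail⟩ := hconv u (huo.mem_nhds hxu)
    have hs1u : s1 ∈ u := htail s1 hs1 (by
      have : (0:X) ∈ C := zero_mem hC (hSC hs1)
      simpa [ConeLE] using this)
    exact ⟨z - f s1, husub ⟨hs1u, hSC hs1⟩, hz (f s1) ⟨s1, hs1, rfl⟩⟩

lemma mainAux {X Y : Type*}
    [AddCommGroup X] [Module ℝ X] [TopologicalSpace X] [IsTopologicalAddGroup X]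
    [AddCommGroup Y] [TopologicalSpace Y] [IsTopologicalAddGroup Y]
    {C : Set X} {D : Set Y} (hC : IsWedgeCone C) (hDclosed : IsClosed D)
    (hXmc : ∀ S : Set X, S ⊆ C → S.Nonempty → DirectedOn (ConeLE C) S →
      (∃ z, ∀ s ∈ S, ConeLE C s z) →
      ∃ b, IsSupOf C S b ∧ ∀ U ∈ nhds b, ∃ s ∈ S, ∀ t ∈ S, ConeLE C s t → t ∈ U)
    {A Ω : Set X} {Θ : Set Y} (hAC : A ⊆ C) (hAdense : C ⊆ closure A)
    (hΩC : Ω ⊆ C) (hΩplus : ∀ w ∈ Ω, ∀ a ∈ A, w + a ∈ Ω)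
    {f : X → Y} (hfcont : ContinuousOn f C) (hfΩ : f '' Ω ⊆ Θ)
    (hiso : ∀ x ∈ Ω, ∀ y ∈ Ω, (ConeLE C x y ↔ ConeLE D (f x) (f y))) :
    (∀ x ∈ MonSupAdjoin C Ω, f x ∈ MonSupAdjoin D Θ) ∧
      ∀ x ∈ MonSupAdjoin C Ω, ∀ y ∈ C, ConeLE C x y → ConeLE D (f x) (f y) := by
  constructor
  · rintro x (hx | ⟨S, hSΩ, hSne, hdir, hbdd, hsup⟩)
    · exact Or.inl (hfΩ ⟨x, hx, rfl⟩)
    · obtain ⟨hxC, hfsup⟩ :=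
        supTransfer hC hDclosed hXmc hΩC hfcont hiso hSΩ hSne hdir hbdd hsup
      refine Or.inr ⟨f '' S, ?_, hSne.image f, ?_, ⟨f x, hfsup.1⟩, hfsup⟩
      · rintro _ ⟨s, hs, rfl⟩; exact hfΩ ⟨s, hSΩ hs, rfl⟩
      · rintro _ ⟨s, hs, rfl⟩ _ ⟨t, ht, rfl⟩
        obtain ⟨r, hr, h1, h2⟩ := hdir s hs t ht
        exact ⟨f r, ⟨r, hr, rfl⟩, (hiso s (hSΩ hs) r (hSΩ hr)).mp h1,
          (hiso t (hSΩ ht) r (hSΩ hr)).mp h2⟩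
  · rintro x (hx | ⟨S, hSΩ, hSne, hdir, hbdd, hsup⟩) y hy hxy
    · exact lemL hDclosed hAC hAdense hΩC hΩplus hfcont hiso hx hy hxy
    · obtain ⟨hxC, hfsup⟩ :=
        supTransfer hC hDclosed hXmc hΩC hfcont hiso hSΩ hSne hdir hbdd hsup
      apply hfsup.2 (f y)
      rintro _ ⟨s, hs, rfl⟩
      exact lemL hDclosed hAC hAdense hΩC hΩplus hfcont hiso (hSΩ hs) hy
        (coneLE_trans hC.1 (hsup.1 s hs) hxy)

end OrderIsoExtAux

/-- Let `X, Y` be Hausdorff real topological vector spaces ordered by closed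
cones `C, D`, in which every bounded increasing net of positive elements has a supremum and
converges to it.  Let `A ⊆ C`, `B ⊆ D` be (net-)dense in `C`, `D` respectively, let
`f : C → D` be a homeomorphism (with inverse `g`), and let `A ⊆ Ω ⊆ C`, `B ⊆ Θ ⊆ D` with
`Ω + A ⊆ Ω`, `Θ + B ⊆ Θ`, such that `f` restricts to an order isomorphism of `Ω` onto `Θ`.
Then `f` restricts to an order isomorphism of `Ω^m` onto `Θ^m`. -/



theorem order_iso_extends_to_monotone_sup_adjoined
    {X Y : Type*}
    [AddCommGroup X] [Module ℝ X] [TopologicalSpace X] [IsTopologicalAddGroup X]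
    [ContinuousSMul ℝ X] [T2Space X]
    [AddCommGroup Y] [Module ℝ Y] [TopologicalSpace Y] [IsTopologicalAddGroup Y]
    [ContinuousSMul ℝ Y] [T2Space Y]
    (C : Set X) (D : Set Y) (hC : IsWedgeCone C) (hD : IsWedgeCone D)
    (hCclosed : IsClosed C) (hDclosed : IsClosed D)
    (hXmc : ∀ S : Set X, S ⊆ C → S.Nonempty → DirectedOn (ConeLE C) S →
      (∃ z, ∀ s ∈ S, ConeLE C s z) →
      ∃ b, IsSupOf C S b ∧ ∀ U ∈ nhds b, ∃ s ∈ S, ∀ t ∈ S, ConeLE C s t → t ∈ U)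
    (hYmc : ∀ S : Set Y, S ⊆ D → S.Nonempty → DirectedOn (ConeLE D) S →
      (∃ z, ∀ s ∈ S, ConeLE D s z) →
      ∃ b, IsSupOf D S b ∧ ∀ U ∈ nhds b, ∃ s ∈ S, ∀ t ∈ S, ConeLE D s t → t ∈ U)
    (A : Set X) (B : Set Y) (hAC : A ⊆ C) (hBD : B ⊆ D)
    (hAdense : C ⊆ closure A) (hBdense : D ⊆ closure B)
    (f : X → Y) (g : Y → X)
    (hfC : Set.MapsTo f C D) (hgD : Set.MapsTo g D C)
    (hgf : ∀ x ∈ C, g (f x) = x) (hfg : ∀ y ∈ D, f (g y) = y)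
    (hfcont : ContinuousOn f C) (hgcont : ContinuousOn g D)
    (Ω : Set X) (Θ : Set Y)
    (hAΩ : A ⊆ Ω) (hΩC : Ω ⊆ C) (hBΘ : B ⊆ Θ) (hΘD : Θ ⊆ D)
    (hΩplus : ∀ w ∈ Ω, ∀ a ∈ A, w + a ∈ Ω)
    (hΘplus : ∀ w ∈ Θ, ∀ b ∈ B, w + b ∈ Θ)
    (hfΩ : f '' Ω = Θ)
    (hiso : ∀ x ∈ Ω, ∀ y ∈ Ω, (ConeLE C x y ↔ ConeLE D (f x) (f y))) :
    f '' MonSupAdjoin C Ω = MonSupAdjoin D Θ ∧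
      ∀ x ∈ MonSupAdjoin C Ω, ∀ y ∈ MonSupAdjoin C Ω,
        (ConeLE C x y ↔ ConeLE D (f x) (f y)) := by
  classical
  have hgΩ : g '' Θ ⊆ Ω := by
    rintro _ ⟨v, hv, rfl⟩
    rw [← hfΩ] at hv
    obtain ⟨w, hw, rfl⟩ := hv
    rw [hgf w (hΩC hw)]
    exact hw
  have hgiso : ∀ u ∈ Θ, ∀ v ∈ Θ, (ConeLE D u v ↔ ConeLE C (g u) (g v)) := by
    intro u hu v hv
    rw [← hfΩ] at hu hv
    obtain ⟨su, hsu, rfl⟩ := hu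
    obtain ⟨sv, hsv, rfl⟩ := hv
    rw [hgf su (hΩC hsu), hgf sv (hΩC hsv)]
    exact (hiso su hsu sv hsv).symm
  have aux1 := OrderIsoExtAux.mainAux hC hDclosed hXmc hAC hAdense hΩC hΩplus hfcont
    (le_of_eq hfΩ) hiso
  have aux2 := OrderIsoExtAux.mainAux hD hCclosed hYmc hBD hBdense hΘD hΘplus hgcont
    hgΩ hgiso
  have hΩmC : MonSupAdjoin C Ω ⊆ C := OrderIsoExtAux.monSupAdjoin_subset hC hΩC
  have hΘmD : MonSupAdjoin D Θ ⊆ D := OrderIsoExtAux.monSupAdjoin_subset hD hΘD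
  constructor
  · apply Set.Subset.antisymm
    · rintro _ ⟨x, hx, rfl⟩
      exact aux1.1 x hx
    · intro y hy
      exact ⟨g y, aux2.1 y hy, hfg y (hΘmD hy)⟩
  · intro x hx y hy
    constructor
    · intro h
      exact aux1.2 x hx y (hΩmC hy) h
    · intro h
      have h2 := aux2.2 (f x) (aux1.1 x hx) (f y) (hΘmD (aux1.1 y hy)) h
      rwa [hgf x (hΩmC hx), hgf y (hΩmC hy)] at h2
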